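/- Let $\ell$ be an even positive integer and let $z$ be a complex number with $|z| \leq \ell/e^2$. Then $e^{\Re(z)} \leq \max\left\{1, |E_\ell(z)|\left(1 + \frac{1}{15 e^\ell}\right)\right\}$, where $E_\ell(z) = \sum_{s=0}^{\ell} z^s/s!$. -/

import Mathlib

open Finset

private lemma fact_key (m : ℕ) :
    4 * (((m : ℝ) + 2) ^ (m + 3) / (m + 3).factorial) ≤ Real.exp ((m : ℝ) + 2) := by
  set x : ℝ := (m : ℝ) + 2 with hxdef
  have hx0 : (0 : ℝ) < x := by positivity
  have hxm : (0 : ℝ) ≤ x ^ m := by positivity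
  have hf0 : (0 : ℝ) < (m.factorial : ℝ) := by exact_mod_cast m.factorial_pos
  have hF := hf0.ne'
  have hm1 : ((m : ℝ) + 1) ≠ 0 := by positivity
  have hm2 : ((m : ℝ) + 2) ≠ 0 := by positivity
  have hm3 : ((m : ℝ) + 3) ≠ 0 := by positivity
  have hf1 : ((m + 1).factorial : ℝ) = ((m : ℝ) + 1) * m.factorial := by
    push_cast [Nat.factorial_succ]; ring
  have hf2 : ((m + 2).factorial : ℝ) = ((m : ℝ) + 2) * (((m : ℝ) + 1) * m.factorial) := by
    push_cast [Nat.factorial_succ]; ring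
  have hf3 : ((m + 3).factorial : ℝ)
      = ((m : ℝ) + 3) * (((m : ℝ) + 2) * (((m : ℝ) + 1) * m.factorial)) := by
    push_cast [Nat.factorial_succ]; ring
  have hsum := Real.sum_le_exp_of_nonneg hx0.le (m + 4)
  refine le_trans ?_ hsum
  rw [sum_range_succ, sum_range_succ, sum_range_succ, sum_range_succ]
  have hnn : 0 ≤ ∑ i ∈ range m, x ^ i / i.factorial := by positivity
  have hD0 : (0 : ℝ) < ((m + 3).factorial : ℝ) := by exact_mod_cast (m + 3).factorial_pos
  have e0 : x ^ m / (m.factorial : ℝ)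
      = x ^ m * (((m : ℝ) + 1) * ((m : ℝ) + 2) * ((m : ℝ) + 3)) / ((m + 3).factorial : ℝ) := by
    rw [hf3]; field_simp
  have e1 : x ^ (m + 1) / ((m + 1).factorial : ℝ)
      = x ^ m * x * (((m : ℝ) + 2) * ((m : ℝ) + 3)) / ((m + 3).factorial : ℝ) := by
    rw [hf1, hf3, pow_succ]; field_simp
  have e2 : x ^ (m + 2) / ((m + 2).factorial : ℝ)
      = x ^ m * x * x * ((m : ℝ) + 3) / ((m + 3).factorial : ℝ) := by
    rw [hf2, hf3, pow_succ, pow_succ]; field_simp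
  have e3 : x ^ (m + 3) / ((m + 3).factorial : ℝ)
      = x ^ m * x * x * x / ((m + 3).factorial : ℝ) := by
    rw [pow_succ, pow_succ, pow_succ]
  have h4 : 4 * (x ^ (m + 3) / ((m + 3).factorial : ℝ))
      ≤ x ^ m / (m.factorial : ℝ) + x ^ (m + 1) / ((m + 1).factorial : ℝ)
        + x ^ (m + 2) / ((m + 2).factorial : ℝ) + x ^ (m + 3) / ((m + 3).factorial : ℝ) := by
    rw [e0, e1, e2, e3, ← add_div, ← add_div, ← add_div,
      ← mul_div_assoc, div_le_div_iff₀ hD0 hD0]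
    have hkey : 4 * (x ^ m * x * x * x)
        ≤ x ^ m * (((m : ℝ) + 1) * ((m : ℝ) + 2) * ((m : ℝ) + 3))
          + x ^ m * x * (((m : ℝ) + 2) * ((m : ℝ) + 3))
          + x ^ m * x * x * ((m : ℝ) + 3) + x ^ m * x * x * x := by
      rw [hxdef]
      nlinarith [mul_nonneg hxm (show (0 : ℝ) ≤ ((m : ℝ) + 2) * (2 * (m : ℝ) + 3) by positivity)]
    exact mul_le_mul_of_nonneg_right hkey hD0.le
  linarith

theorem stmt_6 (ℓ : ℕ) (hℓ : Even ℓ) (hℓpos : 0 < ℓ) (z : ℂ)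
    (hz : ‖z‖ ≤ ℓ / Real.exp 2) :
    Real.exp z.re ≤
      max 1 (‖∑ s ∈ Finset.range (ℓ + 1), z ^ s / s.factorial‖ *
        (1 + 1 / (15 * Real.exp ℓ))) := by
  rcases le_or_gt (Real.exp z.re) 1 with h1 | h1
  · exact le_max_of_le_left h1
  have hX1 : (1 : ℝ) ≤ Real.exp z.re := h1.le
  obtain ⟨m, rfl⟩ : ∃ m, ℓ = m + 2 := by
    have h2 := Nat.even_iff.mp hℓ
    exact ⟨ℓ - 2, by omega⟩
  set ℓ : ℕ := m + 2 with hℓdef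
  set c : ℝ := Real.exp 2 with hc
  have hc7 : (7 : ℝ) < c := by
    have h9 := Real.exp_one_gt_d9
    have h2 : Real.exp 2 = Real.exp 1 * Real.exp 1 := by
      rw [← Real.exp_add]; norm_num
    nlinarith
  have hc1 : (1 : ℝ) < c := by linarith
  have hc0 : (0 : ℝ) < c := by linarith
  have hcm1 : (0 : ℝ) < c - 1 := by linarith
  set a : ℝ := ‖z‖ with ha
  have ha0 : 0 ≤ a := norm_nonneg z
  set A : ℝ := Real.exp ℓ with hA
  have hA1 : (1 : ℝ) ≤ A := by rw [hA]; exact Real.one_le_exp (by positivity)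
  have hA0 : (0 : ℝ) < A := by linarith
  have hsum : Summable (fun s : ℕ => z ^ s / (s.factorial : ℂ)) :=
    NormedSpace.expSeries_div_summable z
  set E : ℂ := ∑ s ∈ Finset.range (ℓ + 1), z ^ s / (s.factorial : ℂ) with hE
  set R : ℂ := ∑' i : ℕ, z ^ (i + (ℓ + 1)) / (((i + (ℓ + 1)).factorial : ℕ) : ℂ) with hR
  have hEz : E + R = Complex.exp z := by
    rw [hE, hR, Complex.exp_eq_exp_ℂ, NormedSpace.exp_eq_tsum_div]
    exact hsum.sum_add_tsum_nat_add (ℓ + 1)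
  set B : ℝ := a ^ (ℓ + 1) / ((ℓ + 1).factorial : ℝ) with hB
  have hB0 : 0 ≤ B := by positivity
  have hterm : ∀ i : ℕ, ‖z ^ (i + (ℓ + 1)) / (((i + (ℓ + 1)).factorial : ℕ) : ℂ)‖
      ≤ B * c⁻¹ ^ i := by
    intro i
    have hfac : ((ℓ + 1).factorial : ℝ) * ((ℓ : ℝ) + 2) ^ i ≤ ((i + (ℓ + 1)).factorial : ℝ) := by
      have h := Nat.factorial_mul_pow_le_factorial (m := ℓ + 1) (n := i)
      rw [add_comm i (ℓ + 1)]
      exact_mod_cast h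
    have hnorm : ‖z ^ (i + (ℓ + 1)) / (((i + (ℓ + 1)).factorial : ℕ) : ℂ)‖
        = a ^ (i + (ℓ + 1)) / ((i + (ℓ + 1)).factorial : ℝ) := by
      rw [norm_div, norm_pow, ← ha, Complex.norm_natCast]
    rw [hnorm]
    have h1 : a ^ (i + (ℓ + 1)) / ((i + (ℓ + 1)).factorial : ℝ)
        ≤ a ^ (i + (ℓ + 1)) / (((ℓ + 1).factorial : ℝ) * ((ℓ : ℝ) + 2) ^ i) := by
      gcongr
    refine h1.trans ?_
    have hsplit : a ^ (i + (ℓ + 1)) = a ^ (ℓ + 1) * a ^ i := by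
      rw [pow_add, mul_comm]
    rw [hsplit]
    have h2 : a ^ (ℓ + 1) * a ^ i / (((ℓ + 1).factorial : ℝ) * ((ℓ : ℝ) + 2) ^ i)
        = B * (a / ((ℓ : ℝ) + 2)) ^ i := by
      rw [hB, div_pow]; ring
    rw [h2]
    have hbase : a / ((ℓ : ℝ) + 2) ≤ c⁻¹ := by
      rw [div_le_iff₀ (by positivity : (0:ℝ) < (ℓ : ℝ) + 2), inv_mul_eq_div, le_div_iff₀ hc0]
      calc a * c ≤ ((ℓ : ℝ) / c) * c := by gcongr
        _ = (ℓ : ℝ) := div_mul_cancel₀ _ hc0.ne'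
        _ ≤ (ℓ : ℝ) + 2 := by linarith
    have hpow := pow_le_pow_left₀ (div_nonneg ha0 (by positivity)) hbase i
    exact mul_le_mul_of_nonneg_left hpow hB0
  have hRnorm : ‖R‖ ≤ B * (1 - c⁻¹)⁻¹ := by
    have hgeo : HasSum (fun i : ℕ => B * c⁻¹ ^ i) (B * (1 - c⁻¹)⁻¹) := by
      refine (hasSum_geometric_of_lt_one (by positivity) ?_).mul_left B
      rw [inv_lt_one_iff₀]; right; exact hc1
    exact tsum_of_norm_bounded hgeo hterm
  -- bound on B
  have hBexp : B ≤ 1 / (4 * c * A) := by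
    have hℓcast : ((ℓ : ℕ) : ℝ) = (m : ℝ) + 2 := by rw [hℓdef]; push_cast; ring
    have hkey' : ((ℓ : ℝ)) ^ (ℓ + 1) / ((ℓ + 1).factorial : ℝ) ≤ A / 4 := by
      have h := fact_key m
      rw [hℓcast, hA, hℓdef, show m + 2 + 1 = m + 3 from rfl]
      rw [show ((m + 2 : ℕ) : ℝ) = (m : ℝ) + 2 by push_cast; ring]
      linarith
    have h2 : B ≤ ((ℓ : ℝ) / c) ^ (ℓ + 1) / ((ℓ + 1).factorial : ℝ) := by
      rw [hB]; gcongr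
    refine h2.trans ?_
    have hcpowA : c ^ (ℓ + 1) = A * A * c := by
      rw [hc, hA, ← Real.exp_nat_mul, ← Real.exp_add, ← Real.exp_add]
      congr 1
      push_cast
      ring
    have hc3 : (0 : ℝ) < c ^ (ℓ + 1) := by positivity
    calc ((ℓ : ℝ) / c) ^ (ℓ + 1) / ((ℓ + 1).factorial : ℝ)
        = ((ℓ : ℝ) ^ (ℓ + 1) / ((ℓ + 1).factorial : ℝ)) / c ^ (ℓ + 1) := by
          rw [div_pow]; ring
      _ ≤ (A / 4) / c ^ (ℓ + 1) := by gcongr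
      _ = 1 / (4 * c * A) := by
          rw [hcpowA]
          field_simp
  have ht : ‖R‖ ≤ 1 / (4 * (c - 1) * A) := by
    refine hRnorm.trans ?_
    have h1c : (1 - c⁻¹)⁻¹ = c / (c - 1) := by
      rw [show (1 : ℝ) - c⁻¹ = (c - 1) / c by field_simp, inv_div]
    rw [h1c]
    have hcc : (0 : ℝ) ≤ c / (c - 1) := le_of_lt (div_pos hc0 (by linarith))
    calc B * (c / (c - 1)) ≤ (1 / (4 * c * A)) * (c / (c - 1)) := by gcongr
      _ = 1 / (4 * (c - 1) * A) := by
          rw [div_mul_div_comm, one_mul, div_eq_div_iff (ne_of_gt (mul_pos (by positivity) hcm1))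
            (ne_of_gt (mul_pos (mul_pos (by norm_num) hcm1) hA0))]
          ring
  -- assembly
  have hXle : Real.exp z.re ≤ ‖E‖ + ‖R‖ := by
    have : Real.exp z.re = ‖E + R‖ := by rw [hEz, Complex.norm_exp]
    rw [this]
    calc ‖E + R‖ ≤ ‖E‖ + ‖R‖ := norm_add_le E R
      _ = ‖E‖ + ‖R‖ := rfl
  refine le_max_of_le_right ?_
  set X : ℝ := Real.exp z.re with hX
  set Y : ℝ := ‖E‖ with hY
  set t : ℝ := ‖R‖ with htdef
  have ht0 : 0 ≤ t := norm_nonneg R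
  clear_value X Y t A c
  clear hterm hRnorm hBexp hB0 hB hEz hR hE hsum hz ha ha0 hX hY htdef
  clear B R E a z
  have hδ0 : (0 : ℝ) < 1 / (15 * A) := by positivity
  have hδle : 1 / (15 * A) ≤ 1 / 15 := by
    rw [div_le_div_iff₀ (by positivity) (by norm_num)]
    nlinarith
  have hts : t * (1 + 1 / (15 * A)) ≤ 1 / (15 * A) := by
    have h1 : t * (1 + 1 / (15 * A)) ≤ (1 / (4 * (c - 1) * A)) * (16 / 15) := by
      have := ht
      have h2 : (1 : ℝ) + 1 / (15 * A) ≤ 16 / 15 := by linarith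
      exact mul_le_mul ht h2 (by positivity) (le_of_lt (div_pos one_pos (mul_pos (mul_pos (by norm_num) hcm1) hA0)))
    refine h1.trans ?_
    rw [div_mul_div_comm, div_le_div_iff₀
      (mul_pos (mul_pos (mul_pos (by norm_num) hcm1) hA0) (by norm_num)) (by positivity)]
    have hprod : 7 * A ≤ c * A := mul_le_mul_of_nonneg_right hc7.le hA0.le
    nlinarith [hprod]
  have hYX : X - t ≤ Y := by linarith [hXle]
  have hfin : X ≤ Y * (1 + 1 / (15 * A)) := by
    have h1 : (X - t) * (1 + 1 / (15 * A)) ≤ Y * (1 + 1 / (15 * A)) :=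
      mul_le_mul_of_nonneg_right hYX (by positivity)
    have h3 : 1 * (1 / (15 * A)) ≤ X * (1 / (15 * A)) :=
      mul_le_mul_of_nonneg_right hX1 hδ0.le
    nlinarith [h1, h3, hts]
  exact hfin
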